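/- Let a ≥ 2 and let A = (a, b_1, …, b_k) be positive integers with gcd(A) = 1. Then the Sylvester sum satisfies s(A) = (1/(2a))·∑_{r=1}^{a−1} N_r² − (1/2)·∑_{r=1}^{a−1} N_r + (a²−1)/12. -/

import Mathlib

/-- `m` is representable by the sequence `A`. -/
def IsRepresentable {n : ℕ} (A : Fin n → ℕ) (m : ℕ) : Prop :=
  ∃ x : Fin n → ℕ, m = ∑ i, A i * x i

/-- `N_r`: the least nonnegative integer congruent to `r` modulo `a` that is
representable by `B`. -/
noncomputable def Nres {k : ℕ} (a : ℕ) (B : Fin k → ℕ) (r : ℕ) : ℕ :=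
  sInf {m : ℕ | m % a = r ∧ IsRepresentable B m}

/-- For `A = (a, b₁, …, b_k)` with `gcd(A) = 1` and `a ≥ 2`, the Sylvester sum
satisfies `s(A) = (1/(2a))·∑_{r=1}^{a-1} N_r² - (1/2)·∑_{r=1}^{a-1} N_r + (a²-1)/12`. -/

lemma finset_gcd_bezout {ι : Type*} [DecidableEq ι] (s : Finset ι) (f : ι → ℕ) :
    ∃ c : ι → ℤ, ((s.gcd f : ℕ) : ℤ) = ∑ i ∈ s, (f i : ℤ) * c i := by
  induction s using Finset.induction_on with
  | empty => exact ⟨fun _ => 0, by simp⟩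
  | @insert b t hb ih =>
    obtain ⟨c, hc⟩ := ih
    refine ⟨fun i => if i = b then Nat.gcdA (f b) (t.gcd f)
      else Nat.gcdB (f b) (t.gcd f) * c i, ?_⟩
    rw [Finset.gcd_insert, Finset.sum_insert hb]
    dsimp only
    rw [if_pos rfl]
    have h1 : (GCDMonoid.gcd (f b) (t.gcd f) : ℕ) = Nat.gcd (f b) (t.gcd f) := rfl
    rw [h1, Nat.gcd_eq_gcd_ab]
    have h2 : ∑ i ∈ t, (f i : ℤ) * (if i = b then Nat.gcdA (f b) (t.gcd f)
        else Nat.gcdB (f b) (t.gcd f) * c i)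
        = Nat.gcdB (f b) (t.gcd f) * ∑ i ∈ t, (f i : ℤ) * c i := by
      rw [Finset.mul_sum]
      refine Finset.sum_congr rfl fun i hi => ?_
      have : i ≠ b := fun h => hb (h ▸ hi)
      rw [if_neg this]; ring
    rw [h2, ← hc]; ring

lemma sumQ1 (n : ℕ) : ∑ j ∈ Finset.range n, (j : ℚ) = n * (n - 1) / 2 := by
  induction n with
  | zero => simp
  | succ n ih => rw [Finset.sum_range_succ, ih]; push_cast; ring

lemma sumQ2 (n : ℕ) : ∑ j ∈ Finset.range n, (j : ℚ) ^ 2 = n * (n - 1) * (2 * n - 1) / 6 := by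
  induction n with
  | zero => simp
  | succ n ih => rw [Finset.sum_range_succ, ih]; push_cast; ring

lemma residue_nonempty {k : ℕ} (a : ℕ) (ha : 2 ≤ a) (B : Fin k → ℕ)
    (hgcd : Finset.univ.gcd (Fin.cons a B) = 1) {r : ℕ} (hr : r < a) :
    ∃ m : ℕ, m % a = r ∧ IsRepresentable B m := by
  haveI : NeZero a := ⟨by omega⟩
  obtain ⟨c, hc⟩ := finset_gcd_bezout Finset.univ (Fin.cons a B)
  rw [hgcd] at hc
  set x : Fin k → ℕ := fun i => ((r * c i.succ) % a).toNat with hxdef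
  refine ⟨∑ i, B i * x i, ?_, ⟨x, rfl⟩⟩
  have hxz : ∀ i, ((x i : ℕ) : ZMod a) = (r : ZMod a) * (c i.succ : ZMod a) := by
    intro i
    have hane : ((a : ℕ) : ℤ) ≠ 0 := by exact_mod_cast (by omega : (a:ℕ) ≠ 0)
    have hnn : (0 : ℤ) ≤ (r * c i.succ) % a := Int.emod_nonneg _ hane
    have hx : ((x i : ℕ) : ℤ) = (r * c i.succ) % a := Int.toNat_of_nonneg hnn
    calc ((x i : ℕ) : ZMod a) = (((x i : ℕ) : ℤ) : ZMod a) := by push_cast; rfl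
      _ = (((r * c i.succ) % a : ℤ) : ZMod a) := by rw [hx]
      _ = ((r * c i.succ : ℤ) : ZMod a) := ZMod.intCast_mod _ _
      _ = (r : ZMod a) * (c i.succ : ZMod a) := by push_cast; ring
  have hone : ∑ i, (B i : ZMod a) * (c i.succ : ZMod a) = 1 := by
    have := congrArg (fun z : ℤ => (z : ZMod a)) hc
    push_cast at this
    rw [Fin.sum_univ_succ] at this
    simp [Fin.cons_zero, Fin.cons_succ, ZMod.natCast_self] at this
    exact this.symm
  have hcast : ((∑ i, B i * x i : ℕ) : ZMod a) = (r : ZMod a) := by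
    push_cast
    calc ∑ i, (B i : ZMod a) * (x i : ZMod a)
        = ∑ i, (r : ZMod a) * ((B i : ZMod a) * (c i.succ : ZMod a)) := by
          refine Finset.sum_congr rfl fun i _ => ?_
          rw [hxz i]; ring
      _ = (r : ZMod a) := by rw [← Finset.mul_sum, hone, mul_one]
  have := congrArg ZMod.val hcast
  rwa [ZMod.val_natCast, ZMod.val_natCast, Nat.mod_eq_of_lt hr] at this

lemma repr_iff {k : ℕ} (a : ℕ) (ha : 2 ≤ a) (B : Fin k → ℕ)
    (hgcd : Finset.univ.gcd (Fin.cons a B) = 1) (m : ℕ) :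
    IsRepresentable (Fin.cons a B) m ↔ Nres a B (m % a) ≤ m := by
  constructor
  · rintro ⟨x, rfl⟩
    rw [Fin.sum_univ_succ]
    simp only [Fin.cons_zero, Fin.cons_succ]
    set n := ∑ i, B i * x i.succ with hn
    have hmod : (a * x 0 + n) % a = n % a := by
      simp [Nat.add_mul_mod_self_left, Nat.mul_mod_right, Nat.add_mod]
    have hle : Nres a B ((a * x 0 + n) % a) ≤ n := by
      apply Nat.sInf_le
      exact ⟨hmod.symm ▸ rfl, ⟨fun i => x i.succ, rfl⟩⟩
    omega
  · intro hle
    have hmem : Nres a B (m % a) % a = m % a ∧ IsRepresentable B (Nres a B (m % a)) :=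
      Nat.sInf_mem (residue_nonempty a ha B hgcd (Nat.mod_lt _ (by omega)))
    obtain ⟨hmod, y, hy⟩ := hmem
    have hdvd : a ∣ m - Nres a B (m % a) :=
      (Nat.modEq_iff_dvd' hle).mp hmod
    obtain ⟨t, ht⟩ := hdvd
    refine ⟨Fin.cons t y, ?_⟩
    rw [Fin.sum_univ_succ]
    simp only [Fin.cons_zero, Fin.cons_succ]
    rw [← hy]
    omega

theorem stmt_2 {k : ℕ} (a : ℕ) (ha : 2 ≤ a) (B : Fin k → ℕ)
    (hBpos : ∀ i, 0 < B i)
    (hgcd : Finset.univ.gcd (Fin.cons a B) = 1) :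
    (∑ᶠ m ∈ {m : ℕ | ¬ IsRepresentable (Fin.cons a B) m}, (m : ℚ)) =
      (1 / (2 * a)) * ∑ r ∈ Finset.Ico 1 a, (Nres a B r : ℚ) ^ 2
        - (1 / 2) * ∑ r ∈ Finset.Ico 1 a, (Nres a B r : ℚ)
        + (a ^ 2 - 1) / 12 := by
  have ha0 : 0 < a := by omega
  set q : ℕ → ℕ := fun r => Nres a B r / a with hq
  have hNr : ∀ r < a, Nres a B r = a * q r + r := by
    intro r hr
    have hmem : Nres a B r % a = r ∧ IsRepresentable B (Nres a B r) :=
      Nat.sInf_mem (residue_nonempty a ha B hgcd hr)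
    have := Nat.div_add_mod (Nres a B r) a
    simp only [hq]
    omega
  have hN0 : Nres a B 0 = 0 := by
    have : Nres a B 0 ≤ 0 := Nat.sInf_le ⟨Nat.zero_mod a, ⟨fun _ => 0, by simp⟩⟩
    omega
  have hq0 : q 0 = 0 := by simp [hq, hN0]
  set t : ℕ → Finset ℕ := fun r => (Finset.range (q r)).image (fun j => a * j + r) with htdef
  set S : Finset ℕ := (Finset.range a).biUnion t with hS
  have hmem_t : ∀ r < a, ∀ m, m ∈ t r ↔ (m % a = r ∧ m / a < q r) := by
    intro r hr m
    simp only [htdef, Finset.mem_image, Finset.mem_range]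
    constructor
    · rintro ⟨j, hj, rfl⟩
      constructor
      · rw [Nat.mul_add_mod, Nat.mod_eq_of_lt hr]
      · rw [Nat.mul_add_div ha0, Nat.div_eq_of_lt hr]
        omega
    · rintro ⟨h1, h2⟩
      have h3 := Nat.div_add_mod m a
      exact ⟨m / a, h2, by omega⟩
  have hset : {m : ℕ | ¬ IsRepresentable (Fin.cons a B) m} = ↑S := by
    ext m
    have hrlt : m % a < a := Nat.mod_lt _ ha0
    simp only [Set.mem_setOf_eq, hS, Finset.coe_biUnion, Finset.coe_sort_coe,
      Set.mem_iUnion, Finset.mem_coe, Finset.mem_range, repr_iff a ha B hgcd m, not_le]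
    constructor
    · intro h
      refine ⟨m % a, hrlt, ?_⟩
      rw [hmem_t _ hrlt]
      refine ⟨rfl, ?_⟩
      have h2 := hNr _ hrlt
      have h3 := Nat.div_add_mod m a
      have : a * (m / a) < a * q (m % a) := by omega
      exact Nat.lt_of_mul_lt_mul_left this
    · rintro ⟨r, hr, hm⟩
      rw [hmem_t _ hr] at hm
      obtain ⟨h1, h2⟩ := hm
      have h3 := hNr _ hr
      have h4 := Nat.div_add_mod m a
      have h5 : a * (m / a) < a * q r := (Nat.mul_lt_mul_left ha0).mpr h2
      rw [h1, h3]
      omega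
  rw [hset, finsum_mem_coe_finset]
  have hdisj : (↑(Finset.range a) : Set ℕ).PairwiseDisjoint t := by
    intro r1 h1 r2 h2 hne
    simp only [Finset.coe_range, Set.mem_Iio] at h1 h2
    simp only [Function.onFun]
    rw [Finset.disjoint_left]
    intro m hm1 hm2
    rw [hmem_t _ h1] at hm1
    rw [hmem_t _ h2] at hm2
    exact hne (hm1.1 ▸ hm2.1 ▸ rfl)
  rw [hS, Finset.sum_biUnion hdisj]
  have hinner : ∀ r, ∑ m ∈ t r, (m : ℚ)
      = (a : ℚ) * (q r * (q r - 1) / 2) + q r * r := by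
    intro r
    rw [htdef]
    dsimp only
    rw [Finset.sum_image (by
      intro x _ y _ h
      have : a * x = a * y := by beta_reduce at h; omega
      exact Nat.eq_of_mul_eq_mul_left ha0 this)]
    push_cast
    rw [Finset.sum_add_distrib, ← Finset.mul_sum, sumQ1]
    simp [Finset.sum_const, mul_comm]
  have hsplit : ∀ g : ℕ → ℚ, g 0 = 0 →
      ∑ r ∈ Finset.range a, g r = ∑ r ∈ Finset.Ico 1 a, g r := by
    intro g hg0
    rw [Finset.sum_Ico_eq_sub g (by omega : 1 ≤ a)]
    simp [hg0]
  rw [Finset.sum_congr rfl (fun r _ => hinner r)]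
  rw [hsplit _ (by simp [hq0])]
  -- replace Nres by a * q r + r in RHS
  have hrep2 : ∑ r ∈ Finset.Ico 1 a, (Nres a B r : ℚ) ^ 2
      = ∑ r ∈ Finset.Ico 1 a, ((a : ℚ) * q r + r) ^ 2 := by
    refine Finset.sum_congr rfl fun r hr => ?_
    rw [Finset.mem_Ico] at hr
    rw [hNr r hr.2]; push_cast; ring
  have hrep1 : ∑ r ∈ Finset.Ico 1 a, (Nres a B r : ℚ)
      = ∑ r ∈ Finset.Ico 1 a, ((a : ℚ) * q r + r) := by
    refine Finset.sum_congr rfl fun r hr => ?_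
    rw [Finset.mem_Ico] at hr
    rw [hNr r hr.2]; push_cast; ring
  rw [hrep2, hrep1]
  have haQ : (a : ℚ) ≠ 0 := by positivity
  have key : ∀ r : ℕ, (a : ℚ) * (q r * (q r - 1) / 2) + q r * r
      = (1 / (2 * a)) * ((a : ℚ) * q r + r) ^ 2 - (1 / 2) * ((a : ℚ) * q r + r)
        - ((1 / (2 * a)) * (r : ℚ) ^ 2 - (1 / 2) * r) := by
    intro r
    field_simp
    ring
  rw [Finset.sum_congr rfl (fun r _ => key r)]
  rw [Finset.sum_sub_distrib, Finset.sum_sub_distrib, Finset.sum_sub_distrib,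
    ← Finset.mul_sum, ← Finset.mul_sum, ← Finset.mul_sum, ← Finset.mul_sum]
  have hs1 : ∑ r ∈ Finset.Ico 1 a, (r : ℚ) = (a : ℚ) * (a - 1) / 2 := by
    rw [← hsplit _ (by simp), sumQ1]
  have hs2 : ∑ r ∈ Finset.Ico 1 a, (r : ℚ) ^ 2 = (a : ℚ) * (a - 1) * (2 * a - 1) / 6 := by
    rw [← hsplit _ (by simp), sumQ2]
  rw [hs1, hs2]
  field_simp
  ring
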